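/- Let f be an ECA with half-limited sensibility with constant k: for every n ≥ 1 there is a finite set S of indices in Fin n with |S| ≤ k such that for all u, u' : Fin n → Bool agreeing on S, all c : Bool and all v : Fin n → Bool, f^n(u,c,v) = f^n(u',c,v). Then for every n ≥ 1 and every c : Bool, the number of distinct rows of M_c^n is at most 2^k and the number of distinct columns of M_c^n is at most 2^(2^k); consequently d_n(f) ≤ 2^(2^k) for all n, so f is in the bounded complexity class. -/

import Mathlib

/-- The `n`-th iterate of a one-dimensional CA local rule `f`, applied to an
assignment `x` of states to integer positions. It only depends on positions `-n,…,n`: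
`caIter f 1 x = f (x (-1)) (x 0) (x 1)` and
`caIter f (n+1) x = f (caIter f n (x shifted left)) (caIter f n x) (caIter f n (x shifted right))`. -/
def caIter {Q : Type*} (f : Q → Q → Q → Q) : ℕ → (ℤ → Q) → Q
  | 0, x => x 0
  | n + 1, x =>
      f (caIter f n fun i => x (i - 1)) (caIter f n x) (caIter f n fun i => x (i + 1))

/-- The assignment of states to integer positions determined by left cells `u`
(`u i` at position `-(i+1)`), center `c` (position `0`) and right cells `v`
(`v i` at position `i+1`); positions outside `-n,…,n` (irrelevant for `caIter f n`)
are padded with `c`. -/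
def caEmbed {Q : Type*} (n : ℕ) (u : Fin n → Q) (c : Q) (v : Fin n → Q) : ℤ → Q :=
  fun i =>
    if h : 1 ≤ i ∧ i ≤ (n : ℤ) then v ⟨(i - 1).toNat, by omega⟩
    else if h' : 1 ≤ -i ∧ -i ≤ (n : ℤ) then u ⟨(-i - 1).toNat, by omega⟩
    else c

/-- `f^n(u, c, v)`. -/
def caApply {Q : Type*} (f : Q → Q → Q → Q) (n : ℕ) (u : Fin n → Q) (c : Q)
    (v : Fin n → Q) : Q :=
  caIter f n (caEmbed n u c v)

/-- Number of distinct rows of the matrix `M_c^n`. -/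
noncomputable def caRows {Q : Type*} (f : Q → Q → Q → Q) (n : ℕ) (c : Q) : ℕ :=
  Set.ncard {g : (Fin n → Q) → Q | ∃ u : Fin n → Q, g = fun v => caApply f n u c v}

/-- Number of distinct columns of the matrix `M_c^n`. -/
noncomputable def caCols {Q : Type*} (f : Q → Q → Q → Q) (n : ℕ) (c : Q) : ℕ :=
  Set.ncard {g : (Fin n → Q) → Q | ∃ v : Fin n → Q, g = fun u => caApply f n u c v}

/-- `d_n(f)` for an ECA `f`. -/
noncomputable def dnECA (f : Bool → Bool → Bool → Bool) (n : ℕ) : ℕ :=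
  max (max (caRows f n false) (caCols f n false)) (max (caRows f n true) (caCols f n true))

/-- An ECA with half-limited sensibility (with constant `k`) has, for every `n ≥ 1` and
`c : Bool`, at most `2^k` distinct rows and at most `2^(2^k)` distinct columns in `M_c^n`;
consequently `d_n(f) ≤ 2^(2^k)`, i.e. `f` is in the bounded complexity class. -/
theorem halfLimitedSensibility_bounded (f : Bool → Bool → Bool → Bool) (k : ℕ)
    (hsens : ∀ n : ℕ, 1 ≤ n → ∃ S : Finset (Fin n), S.card ≤ k ∧
      ∀ u u' : Fin n → Bool, (∀ i ∈ S, u i = u' i) →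
        ∀ (c : Bool) (v : Fin n → Bool), caApply f n u c v = caApply f n u' c v) :
    ∀ n : ℕ, 1 ≤ n →
      (∀ c : Bool, caRows f n c ≤ 2 ^ k ∧ caCols f n c ≤ 2 ^ (2 ^ k)) ∧
      dnECA f n ≤ 2 ^ (2 ^ k) := by
  intro n hn
  obtain ⟨S, hScard, hS⟩ := hsens n hn
  -- extension of a partial assignment on S by false
  set ext : (S → Bool) → (Fin n → Bool) := fun a i =>
    if h : i ∈ S then a ⟨i, h⟩ else false with hext
  have key : ∀ (u : Fin n → Bool) (c : Bool) (v : Fin n → Bool),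
      caApply f n u c v = caApply f n (ext fun i : S => u i) c v := by
    intro u c v
    apply hS
    intro i hi
    simp [hext, hi]
  have hrows : ∀ c : Bool, caRows f n c ≤ 2 ^ k := by
    intro c
    have hsub : {g : (Fin n → Bool) → Bool | ∃ u, g = fun v => caApply f n u c v} ⊆
        Set.range (fun a : S → Bool => fun v => caApply f n (ext a) c v) := by
      rintro g ⟨u, rfl⟩
      refine ⟨fun i : S => u i, ?_⟩
      funext v
      exact (key u c v).symm
    calc caRows f n c ≤ (Set.range (fun a : S → Bool =>
            fun v => caApply f n (ext a) c v)).ncard :=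
          Set.ncard_le_ncard hsub (Set.finite_range _)
      _ ≤ Nat.card (S → Bool) := (by
            rw [← Set.image_univ]
            exact (Set.ncard_image_le Set.finite_univ).trans_eq (Set.ncard_univ _))
      _ = 2 ^ S.card := by
          simp [Nat.card_eq_fintype_card, Fintype.card_fun]
      _ ≤ 2 ^ k := Nat.pow_le_pow_right (by norm_num) hScard
  have hcols : ∀ c : Bool, caCols f n c ≤ 2 ^ (2 ^ k) := by
    intro c
    have hsub : {g : (Fin n → Bool) → Bool | ∃ v, g = fun u => caApply f n u c v} ⊆
        Set.range (fun b : (S → Bool) → Bool => fun u : Fin n → Bool =>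
          b fun i : S => u i) := by
      rintro g ⟨v, rfl⟩
      refine ⟨fun a => caApply f n (ext a) c v, ?_⟩
      funext u
      exact (key u c v).symm
    calc caCols f n c ≤ (Set.range (fun b : (S → Bool) → Bool =>
            fun u : Fin n → Bool => b fun i : S => u i)).ncard :=
          Set.ncard_le_ncard hsub (Set.finite_range _)
      _ ≤ Nat.card ((S → Bool) → Bool) := (by
            rw [← Set.image_univ]
            exact (Set.ncard_image_le Set.finite_univ).trans_eq (Set.ncard_univ _))
      _ = 2 ^ 2 ^ S.card := by
          simp [Nat.card_eq_fintype_card, Fintype.card_fun]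
      _ ≤ 2 ^ 2 ^ k := Nat.pow_le_pow_right (by norm_num)
            (Nat.pow_le_pow_right (by norm_num) hScard)
  refine ⟨fun c => ⟨hrows c, hcols c⟩, ?_⟩
  have hk : (2 : ℕ) ^ k ≤ 2 ^ 2 ^ k :=
    Nat.pow_le_pow_right (by norm_num) (Nat.lt_two_pow_self (n := k)).le
  have h1 := hrows false; have h2 := hrows true
  have h3 := hcols false; have h4 := hcols true
  simp only [dnECA, max_le_iff]
  exact ⟨⟨h1.trans hk, h3⟩, ⟨h2.trans hk, h4⟩⟩
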